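/- If a graph G has a homomorphism from its complement to the complement of H, then for every d the Shannon capacity style inequality α(G^d) ≤ α(H^d) holds, and hence Θ(G) ≤ Θ(H). -/

import Mathlib

/-- Circular distance between two elements of `ZMod n`. -/
def cyclicDist (n : ℕ) (a b : ZMod n) : ℕ := min (a - b).val (b - a).val

/-- The circular graph `C_{k,n}` on `ZMod n`: distinct vertices are adjacent
iff their circular distance is strictly less than `k`. -/
def circularGraph (k n : ℕ) : SimpleGraph (ZMod n) where
  Adj u v := u ≠ v ∧ cyclicDist n u v < k
  symm := by
    constructor
    rintro u v ⟨h1, h2⟩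
    exact ⟨h1.symm, by simpa [cyclicDist, min_comm] using h2⟩
  loopless := by constructor; rintro u ⟨h, _⟩; exact h rfl

/-- The `d`-th strong product power of a graph. -/
def strongPower {V : Type*} (G : SimpleGraph V) (d : ℕ) : SimpleGraph (Fin d → V) where
  Adj x y := x ≠ y ∧ ∀ i, x i = y i ∨ G.Adj (x i) (y i)
  symm := by
    constructor
    rintro x y ⟨h1, h2⟩
    exact ⟨h1.symm, fun i => (h2 i).imp Eq.symm (fun h => G.adj_symm h)⟩
  loopless := by constructor; rintro x ⟨h, _⟩; exact h rfl

/-- A set of vertices is independent if no two of its elements are adjacent. -/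
def IsIndep {V : Type*} (G : SimpleGraph V) (s : Set V) : Prop :=
  ∀ u ∈ s, ∀ v ∈ s, u ≠ v → ¬ G.Adj u v

/-- The independence number of a graph on a finite vertex set. -/
noncomputable def alpha {V : Type*} [Fintype V] (G : SimpleGraph V) : ℕ :=
  sSup {m | ∃ s : Finset V, IsIndep G ↑s ∧ s.card = m}

/-- The Shannon capacity of a graph. -/
noncomputable def shannonCapacity {V : Type*} [Fintype V] (G : SimpleGraph V) : ℝ :=
  ⨆ d : ℕ+, (alpha (strongPower G d) : ℝ) ^ ((1 : ℝ) / (d : ℝ))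

lemma key_nonadj {V W : Type*} (G : SimpleGraph V) (H : SimpleGraph W)
    (f : Gᶜ →g Hᶜ) {d : ℕ} {x y : Fin d → V} (hne : x ≠ y)
    (hnadj : ¬ (strongPower G d).Adj x y) :
    (fun i => f (x i)) ≠ (fun i => f (y i)) ∧
      ¬ (strongPower H d).Adj (fun i => f (x i)) (fun i => f (y i)) := by
  have : ¬ ∀ i, x i = y i ∨ G.Adj (x i) (y i) := by
    intro h; exact hnadj ⟨hne, h⟩
  push_neg at this
  obtain ⟨i, hxy, hG⟩ := this
  have hc : Gᶜ.Adj (x i) (y i) := ⟨hxy, hG⟩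
  have hH : Hᶜ.Adj (f (x i)) (f (y i)) := f.map_adj hc
  obtain ⟨hfne, hfnadj⟩ := hH
  constructor
  · intro h
    exact hfne (congrFun h i)
  · rintro ⟨_, hall⟩
    rcases hall i with h | h
    · exact hfne h
    · exact hfnadj h

lemma alpha_le_of_hom {V W : Type*} [Fintype V] [Fintype W] (G : SimpleGraph V)
    (H : SimpleGraph W) (f : Gᶜ →g Hᶜ) (d : ℕ) :
    alpha (strongPower G d) ≤ alpha (strongPower H d) := by
  classical
  have hne0 : (0 : ℕ) ∈ {m | ∃ s : Finset (Fin d → V), IsIndep (strongPower G d) ↑s ∧ s.card = m} :=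
    ⟨∅, by simp [IsIndep], by simp⟩
  refine csSup_le ⟨0, hne0⟩ ?_
  rintro m ⟨s, hs, rfl⟩
  set F : (Fin d → V) → (Fin d → W) := fun x i => f (x i) with hF
  have hinj : Set.InjOn F ↑s := by
    intro a ha b hb hab
    by_contra hne
    exact (key_nonadj G H f hne (hs a ha b hb hne)).1 hab
  have himg : IsIndep (strongPower H d) ↑(s.image F) := by
    intro u hu v hv huv
    simp only [Finset.coe_image, Set.mem_image, Finset.mem_coe] at hu hv
    obtain ⟨a, ha, rfl⟩ := hu
    obtain ⟨b, hb, rfl⟩ := hv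
    have hab : a ≠ b := by rintro rfl; exact huv rfl
    exact (key_nonadj G H f hab (hs a ha b hb hab)).2
  have hcard : (s.image F).card = s.card := Finset.card_image_of_injOn hinj
  have hmem : s.card ∈ {m | ∃ t : Finset (Fin d → W), IsIndep (strongPower H d) ↑t ∧ t.card = m} :=
    ⟨s.image F, himg, hcard⟩
  refine le_csSup ⟨Fintype.card (Fin d → W), ?_⟩ hmem
  rintro m ⟨t, _, rfl⟩
  exact t.card_le_univ

lemma alpha_le_card {V : Type*} [Fintype V] (G : SimpleGraph V) :
    alpha G ≤ Fintype.card V := by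
  refine csSup_le ⟨0, ∅, by simp [IsIndep], by simp⟩ ?_
  rintro m ⟨s, _, rfl⟩
  exact s.card_le_univ

theorem stmt17 {V W : Type*} [Fintype V] [Fintype W] (G : SimpleGraph V) (H : SimpleGraph W)
    (f : Gᶜ →g Hᶜ) :
    (∀ d : ℕ, 0 < d → alpha (strongPower G d) ≤ alpha (strongPower H d)) ∧
    shannonCapacity G ≤ shannonCapacity H := by
  classical
  have halpha : ∀ d : ℕ, alpha (strongPower G d) ≤ alpha (strongPower H d) :=
    alpha_le_of_hom G H f
  refine ⟨fun d _ => halpha d, ?_⟩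
  set B : ℝ := max 1 (Fintype.card W) with hB
  have hB0 : (0 : ℝ) ≤ B := le_trans zero_le_one (le_max_left _ _)
  have hbound : ∀ d : ℕ+, (alpha (strongPower H d) : ℝ) ^ ((1 : ℝ) / (d : ℝ)) ≤ B := by
    intro d
    have h1 : (alpha (strongPower H d) : ℝ) ≤ B ^ (d : ℕ) := by
      have := alpha_le_card (strongPower H d)
      have hc : Fintype.card (Fin d → W) = Fintype.card W ^ (d : ℕ) := by
        simp [Fintype.card_fun]
      calc (alpha (strongPower H d) : ℝ) ≤ (Fintype.card W : ℝ) ^ (d : ℕ) := by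
              exact_mod_cast hc ▸ this
        _ ≤ B ^ (d : ℕ) := by
              exact pow_le_pow_left₀ (by positivity) (le_max_right _ _) _
    have hd0 : (d : ℝ) ≠ 0 := by exact_mod_cast d.ne_zero
    have hexp : (0 : ℝ) ≤ (1 : ℝ) / (d : ℝ) := by positivity
    calc (alpha (strongPower H d) : ℝ) ^ ((1 : ℝ) / (d : ℝ))
        ≤ (B ^ (d : ℕ)) ^ ((1 : ℝ) / (d : ℝ)) :=
          Real.rpow_le_rpow (by positivity) h1 hexp
      _ = B := by
          rw [← Real.rpow_natCast B (d : ℕ), ← Real.rpow_mul hB0]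
          rw [mul_one_div, div_self hd0, Real.rpow_one]
  have hbdd : BddAbove (Set.range fun d : ℕ+ =>
      (alpha (strongPower H d) : ℝ) ^ ((1 : ℝ) / (d : ℝ))) := by
    exact ⟨B, by rintro x ⟨d, rfl⟩; exact hbound d⟩
  refine ciSup_le fun d => ?_
  calc (alpha (strongPower G d) : ℝ) ^ ((1 : ℝ) / (d : ℝ))
      ≤ (alpha (strongPower H d) : ℝ) ^ ((1 : ℝ) / (d : ℝ)) :=
        Real.rpow_le_rpow (by positivity) (by exact_mod_cast halpha d) (by positivity)
    _ ≤ shannonCapacity H := le_ciSup hbdd d
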